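/- Let V be a finite-dimensional real inner product space, S : V → V self-adjoint, X₁,…,X_s ∈ V and ω ∈ Λ^p V with s ≤ p. Then S^{[p−s]}(ι_{X₁∧⋯∧X_s} ω) = ι_{X₁∧⋯∧X_s}(S^{[p]} ω) − ι_{S^{[s]}(X₁∧⋯∧X_s)} ω, where ι_{X₁∧⋯∧X_s} ω is the (p−s)-form (Y₁,…,Y_{p−s}) ↦ ω(X_s,…,X₁,Y₁,…,Y_{p−s}). -/

import Mathlib

noncomputable section
open Finset

/-- `m`-dimensional Euclidean space. -/
abbrev E (m : ℕ) := EuclideanSpace ℝ (Fin m)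

/-- standard orthonormal basis vector -/
def sb (m : ℕ) (i : Fin m) : E m := EuclideanSpace.single i 1

/-- the induced inner product on `p`-forms (computed via the standard basis) -/
def rInner (m p : ℕ) (f g : (Fin p → E m) → ℝ) : ℝ :=
  (Nat.factorial p : ℝ)⁻¹ *
    ∑ σ : Fin p → Fin m, f (fun k => sb m (σ k)) * g (fun k => sb m (σ k))

/-- the induced norm on `p`-forms -/
def rNorm (m p : ℕ) (f : (Fin p → E m) → ℝ) : ℝ := Real.sqrt (rInner m p f f)

/-- the derivation extension `S^{[p]}` of an endomorphism `S` to `p`-forms: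
`S^{[p]}ω(X₁,…,X_p) = Σᵢ ω(X₁,…,S Xᵢ,…,X_p)` -/
def sder (m : ℕ) (S : E m →ₗ[ℝ] E m) (p : ℕ) (f : (Fin p → E m) → ℝ) :
    (Fin p → E m) → ℝ :=
  fun X => ∑ i : Fin p, f (Function.update X i (S (X i)))

/-- interior product of a vector with a `(p+1)`-form -/
def iprod (m p : ℕ) (v : E m) (f : (Fin (p+1) → E m) → ℝ) : (Fin p → E m) → ℝ :=
  fun Y => f (Fin.cons v Y)

/-- wedge of a vector (via the metric) with a `p`-form -/
def wedgeV (m p : ℕ) (v : E m) (f : (Fin p → E m) → ℝ) : (Fin (p+1) → E m) → ℝ :=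
  fun Y => ∑ i : Fin (p+1),
    (-1 : ℝ) ^ (i : ℕ) * (inner ℝ v (Y i) : ℝ) * f (fun k => Y (i.succAbove k))

/-- interior product of the `s`-vector `X₁ ∧ ⋯ ∧ X_s` with an `(s+t)`-form:
`(Y₁,…,Y_t) ↦ ω(X_s,…,X₁,Y₁,…,Y_t)` -/
def iprodMulti (m s t : ℕ) (X : Fin s → E m) (f : (Fin (s+t) → E m) → ℝ) :
    (Fin t → E m) → ℝ :=
  fun Y => f (Fin.append (fun k => X k.rev) Y)

/-- wedge `X₁ ∧ ⋯ ∧ X_s ∧ ψ` of an `s`-tuple of vectors (via the metric) with a `t`-form -/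
def wedgeMulti (m s t : ℕ) (X : Fin s → E m) (f : (Fin t → E m) → ℝ) :
    (Fin (s+t) → E m) → ℝ :=
  fun Y => ((Nat.factorial s * Nat.factorial t : ℕ) : ℝ)⁻¹ *
    ∑ σ : Equiv.Perm (Fin (s+t)),
      ((Equiv.Perm.sign σ : ℤ) : ℝ) *
        Matrix.det (Matrix.of fun i j : Fin s =>
          (inner ℝ (X i) (Y (σ (Fin.castAdd t j))) : ℝ)) *
        f (fun k => Y (σ (Fin.natAdd s k)))


lemma upd_append_left (s t : ℕ) {α : Type*} (A : Fin s → α) (Y : Fin t → α) (i : Fin s) (v : α) :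
    Function.update (Fin.append A Y) (Fin.castAdd t i) v = Fin.append (Function.update A i v) Y := by
  funext k
  refine Fin.addCases (fun j => ?_) (fun j => ?_) k
  · simp [Function.update_apply, Fin.ext_iff]
  · simp [Function.update_apply, Fin.ext_iff]
    omega

lemma upd_append_right (s t : ℕ) {α : Type*} (A : Fin s → α) (Y : Fin t → α) (i : Fin t) (v : α) :
    Function.update (Fin.append A Y) (Fin.natAdd s i) v = Fin.append A (Function.update Y i v) := by
  funext k
  refine Fin.addCases (fun j => ?_) (fun j => ?_) k
  · simp [Function.update_apply, Fin.ext_iff]; omega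
  · simp [Function.update_apply, Fin.ext_iff]

lemma upd_rev (s : ℕ) {α : Type*} (X : Fin s → α) (j : Fin s) (v : α) :
    (fun k : Fin s => (Function.update X j v) k.rev) =
      Function.update (fun k : Fin s => X k.rev) j.rev v := by
  funext k
  simp [Function.update_apply, Fin.rev_eq_iff]

/-- for self-adjoint `S`, vectors `X₁,…,X_s` and an `(s+t)`-form `ω`,
`S^{[t]}(ι_{X₁∧⋯∧X_s} ω) = ι_{X₁∧⋯∧X_s}(S^{[s+t]} ω) − ι_{S^{[s]}(X₁∧⋯∧X_s)} ω`,
where `ι_{S^{[s]}(X₁∧⋯∧X_s)} ω = Σⱼ ι_{X₁∧⋯∧S Xⱼ∧⋯∧X_s} ω`. -/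
theorem sder_iprodMulti (m s t : ℕ) (S : E m →ₗ[ℝ] E m)
    (hSsym : ∀ x y : E m, (inner ℝ (S x) y : ℝ) = inner ℝ x (S y))
    (X : Fin s → E m) (ω : (E m) [⋀^Fin (s+t)]→ₗ[ℝ] ℝ) (Y : Fin t → E m) :
    sder m S t (iprodMulti m s t X ⇑ω) Y =
      iprodMulti m s t X (sder m S (s+t) ⇑ω) Y -
        ∑ j : Fin s, iprodMulti m s t (Function.update X j (S (X j))) ⇑ω Y := by
  simp only [sder, iprodMulti]
  rw [Fin.sum_univ_add]
  have h1 : ∀ i : Fin t,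
      ω (Function.update (Fin.append (fun k => X k.rev) Y) (Fin.natAdd s i)
          (S (Fin.append (fun k => X k.rev) Y (Fin.natAdd s i)))) =
      ω (Fin.append (fun k => X k.rev) (Function.update Y i (S (Y i)))) := by
    intro i
    rw [Fin.append_right, upd_append_right]
  have h2 : (∑ i : Fin s,
      ω (Function.update (Fin.append (fun k => X k.rev) Y) (Fin.castAdd t i)
          (S (Fin.append (fun k => X k.rev) Y (Fin.castAdd t i)))) : ℝ) =
      ∑ j : Fin s, ω (Fin.append (fun k => (Function.update X j (S (X j))) k.rev) Y) := by
    refine Fintype.sum_equiv (Fin.revPerm) _ _ (fun i => ?_)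
    congr 1
    rw [upd_rev, Fin.append_left, upd_append_left]
    simp
  simp only [h1, h2]
  ring
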